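/- A consistently connected cyclic system of rank n of ±1-valued random variables is noncontextual if and only if s_odd(E[R_1^{(1)} R_2^{(1)}], E[R_2^{(2)} R_3^{(2)}], ..., E[R_n^{(n)} R_1^{(n)}]) ≤ n - 2, where s_odd(x_1,...,x_n) is the maximum of ±x_1 ± ... ± x_n over all choices of signs with an odd number of minus signs. -/

import Mathlib

open Finset
open scoped Classical

/-- A probability distribution on a finite type. -/
def IsDist {α : Type*} [Fintype α] (p : α → ℝ) : Prop :=
  (∀ a, 0 ≤ p a) ∧ ∑ a, p a = 1

/-- The value `±1` encoded by a `Bool`. -/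
def sgn (b : Bool) : ℝ := if b then 1 else -1

namespace Cyc

@[simp] lemma sgn_true : sgn true = 1 := rfl
@[simp] lemma sgn_false : sgn false = -1 := rfl

lemma sgn_cases (b : Bool) : sgn b = 1 ∨ sgn b = -1 := by cases b <;> simp

@[simp] lemma sgn_sq (b : Bool) : sgn b * sgn b = 1 := by cases b <;> norm_num

noncomputable section

def m1 (p : Bool × Bool → ℝ) : ℝ := ∑ a, sgn a * ∑ b, p (a, b)
def m2 (p : Bool × Bool → ℝ) : ℝ := ∑ b, sgn b * ∑ a, p (a, b)
def corr (p : Bool × Bool → ℝ) : ℝ := ∑ a, ∑ b, sgn a * sgn b * p (a, b)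

def pairD (e f c : ℝ) : Bool × Bool → ℝ :=
  fun q => (1 + sgn q.1 * e + sgn q.2 * f + sgn q.1 * sgn q.2 * c) / 4

def PairOK (e f c : ℝ) : Prop :=
  0 ≤ 1 + e + f + c ∧ 0 ≤ 1 + e - f - c ∧ 0 ≤ 1 - e + f - c ∧ 0 ≤ 1 - e - f + c

lemma m1_eq (p : Bool × Bool → ℝ) :
    m1 p = p (true, true) + p (true, false) - p (false, true) - p (false, false) := by
  simp [m1, Fintype.sum_bool]; ring

lemma m2_eq (p : Bool × Bool → ℝ) :
    m2 p = p (true, true) - p (true, false) + p (false, true) - p (false, false) := by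
  simp [m2, Fintype.sum_bool]; ring

lemma corr_eq (p : Bool × Bool → ℝ) :
    corr p = p (true, true) - p (true, false) - p (false, true) + p (false, false) := by
  simp [corr, Fintype.sum_bool]; ring

lemma sum_pair (p : Bool × Bool → ℝ) :
    ∑ q, p q = p (true, true) + p (true, false) + p (false, true) + p (false, false) := by
  rw [Fintype.sum_prod_type]
  simp [Fintype.sum_bool]; ring

lemma dist_pt {p : Bool × Bool → ℝ} (hsum : ∑ q, p q = 1) (a b : Bool) :
    p (a, b) = pairD (m1 p) (m2 p) (corr p) (a, b) := by
  rw [sum_pair] at hsum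
  cases a <;> cases b <;>
    simp [pairD, m1_eq, m2_eq, corr_eq] <;> linarith

lemma pairOK_of_isDist {p : Bool × Bool → ℝ} (hp : IsDist p) :
    PairOK (m1 p) (m2 p) (corr p) := by
  have h1 := hp.1 (true, true)
  have h2 := hp.1 (true, false)
  have h3 := hp.1 (false, true)
  have h4 := hp.1 (false, false)
  have hs := hp.2
  rw [sum_pair] at hs
  refine ⟨?_, ?_, ?_, ?_⟩ <;> rw [m1_eq, m2_eq, corr_eq] <;> linarith

lemma pairD_nonneg {e f c : ℝ} (h : PairOK e f c) (q : Bool × Bool) :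
    0 ≤ pairD e f c q := by
  obtain ⟨h1, h2, h3, h4⟩ := h
  obtain ⟨a, b⟩ := q
  cases a <;> cases b <;> simp [pairD] <;> linarith

lemma prod_sgn_pm {ι : Type*} (S : Finset ι) (f : ι → Bool) :
    (∏ k ∈ S, sgn (f k)) = 1 ∨ (∏ k ∈ S, sgn (f k)) = -1 := by
  classical
  induction S using Finset.induction_on with
  | empty => simp
  | insert _ _ h ih =>
    rw [Finset.prod_insert h]
    rcases sgn_cases (f _) with h1 | h1 <;> rcases ih with h2 | h2 <;>
      rw [h1, h2] <;> norm_num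

lemma edge {p : Bool × Bool → ℝ} (hp : IsDist p) {s : ℝ} (hs : s = 1 ∨ s = -1) :
    |s * m2 p - m1 p| ≤ 1 - s * corr p := by
  obtain ⟨h1, h2, h3, h4⟩ := pairOK_of_isDist hp
  rcases hs with rfl | rfl <;> rw [abs_le] <;> constructor <;> linarith

lemma maxabs (A B : ℝ) : max |A| |B| = |A + B| / 2 + |A - B| / 2 := by
  rcases max_cases |A| |B| with ⟨h1, h2⟩ | ⟨h1, h2⟩ <;>
    rcases abs_cases (A + B) with ⟨g1, _⟩ | ⟨g1, _⟩ <;>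
    rcases abs_cases (A - B) with ⟨k1, _⟩ | ⟨k1, _⟩ <;>
    rcases abs_cases A with ⟨a1, _⟩ | ⟨a1, _⟩ <;>
    rcases abs_cases B with ⟨b1, _⟩ | ⟨b1, _⟩ <;>
    rw [h1] <;> linarith

def tau (q α β tx : Bool → ℝ) : Bool → Bool → Bool → ℝ :=
  fun u x v => (q x + sgn u * α x + sgn v * β x + sgn u * sgn v * tx x) / 4

lemma tau_nonneg {q α β tx : Bool → ℝ}
    (h : ∀ x, |α x + β x| - q x ≤ tx x ∧ tx x ≤ q x - |α x - β x|) (u x v : Bool) :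
    0 ≤ tau q α β tx u x v := by
  obtain ⟨hl, hu⟩ := h x
  cases u <;> cases v <;> simp [tau] <;>
    rcases abs_cases (α x + β x) with ⟨g1, _⟩ | ⟨g1, _⟩ <;>
    rcases abs_cases (α x - β x) with ⟨k1, _⟩ | ⟨k1, _⟩ <;> linarith

lemma tau_sum3 (q α β tx : Bool → ℝ) (u x : Bool) :
    ∑ v, tau q α β tx u x v = (q x + sgn u * α x) / 2 := by
  simp [tau, Fintype.sum_bool]; ring

lemma tau_sum1 (q α β tx : Bool → ℝ) (x v : Bool) :
    ∑ u, tau q α β tx u x v = (q x + sgn v * β x) / 2 := by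
  simp [tau, Fintype.sum_bool]; ring

lemma tau_sum2 (q α β tx : Bool → ℝ) (u v : Bool) :
    ∑ x, tau q α β tx u x v =
      ((q true + q false) + sgn u * (α true + α false) + sgn v * (β true + β false)
        + sgn u * sgn v * (tx true + tx false)) / 4 := by
  simp [tau, Fintype.sum_bool]; ring

lemma m1_eq_m2 {μp : ℕ → Bool × Bool → ℝ} {j : ℕ}
    (h : ∀ a : Bool, (∑ b, μp (j+1) (a, b)) = ∑ b, μp j (b, a)) :
    m1 (μp (j+1)) = m2 (μp j) := by
  rw [m1, m2]
  exact Finset.sum_congr rfl fun a _ => by rw [h a]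

lemma telescope (m : ℕ) (hm : 1 ≤ m) :
    ∀ (μp : ℕ → Bool × Bool → ℝ),
    (∀ k, k < m → IsDist (μp k)) →
    (∀ k (a : Bool), k + 1 < m → (∑ b, μp (k+1) (a, b)) = ∑ b, μp k (b, a)) →
    ∀ σ : ℕ → Bool,
      |(∏ k ∈ range m, sgn (σ k)) * m2 (μp (m-1)) - m1 (μp 0)| ≤
        ∑ k ∈ range m, (1 - sgn (σ k) * corr (μp k)) := by
  induction m, hm using Nat.le_induction with
  | base =>
    intro μp hd _ σ
    simpa using edge (hd 0 (by omega)) (sgn_cases (σ 0))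
  | succ m hm IH =>
    intro μp hd hcons σ
    have hEm : m1 (μp m) = m2 (μp (m-1)) := by
      have := m1_eq_m2 (μp := μp) (j := m - 1)
        (fun a => by
          have h := hcons (m-1) a (by omega)
          simpa [Nat.sub_add_cancel hm] using h)
      simpa [Nat.sub_add_cancel hm] using this
    have hIH := IH μp (fun k hk => hd k (by omega)) (fun k a hk => hcons k a (by omega)) σ
    have hg := prod_sgn_pm (range m) σ
    have hedge := edge (hd m (by omega)) (sgn_cases (σ m))
    rw [Finset.prod_range_succ, Finset.sum_range_succ]
    simp only [Nat.add_sub_cancel]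
    have key : |(∏ k ∈ range m, sgn (σ k)) * sgn (σ m) * m2 (μp m) - m1 (μp 0)| ≤
        |(∏ k ∈ range m, sgn (σ k))| * |sgn (σ m) * m2 (μp m) - m1 (μp m)| +
        |(∏ k ∈ range m, sgn (σ k)) * m2 (μp (m-1)) - m1 (μp 0)| := by
      rw [← abs_mul]
      have : (∏ k ∈ range m, sgn (σ k)) * sgn (σ m) * m2 (μp m) - m1 (μp 0) =
          ((∏ k ∈ range m, sgn (σ k)) * (sgn (σ m) * m2 (μp m) - m1 (μp m))) +
          ((∏ k ∈ range m, sgn (σ k)) * m2 (μp (m-1)) - m1 (μp 0)) := by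
        rw [← hEm]; ring
      rw [this]
      exact abs_add_le _ _
    have habs : |(∏ k ∈ range m, sgn (σ k))| = 1 := by
      rcases hg with h | h <;> rw [h] <;> norm_num
    rw [habs, one_mul] at key
    linarith

set_option maxHeartbeats 2000000 in
lemma path (m : ℕ) (hm : 1 ≤ m) :
    ∀ (μp : ℕ → Bool × Bool → ℝ) (t : ℝ),
    (∀ k, k < m → IsDist (μp k)) →
    (∀ k (a : Bool), k + 1 < m → (∑ b, μp (k+1) (a, b)) = ∑ b, μp k (b, a)) →
    PairOK (m2 (μp (m-1))) (m1 (μp 0)) t →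
    (∀ σ : ℕ → Bool,
      (∑ k ∈ range m, sgn (σ k) * corr (μp k)) - t * ∏ k ∈ range m, sgn (σ k) ≤ (m : ℝ) - 1) →
    ∃ ψ : (Fin (m+1) → Bool) → ℝ, IsDist ψ ∧
      (∀ k, ∀ hk : k < m, ∀ a b : Bool,
        (∑ y ∈ univ.filter (fun y : Fin (m+1) → Bool =>
            y ⟨k, by omega⟩ = a ∧ y ⟨k+1, by omega⟩ = b), ψ y) = μp k (a, b)) ∧
      (∀ a b : Bool,
        (∑ y ∈ univ.filter (fun y : Fin (m+1) → Bool =>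
            y ⟨m, by omega⟩ = a ∧ y 0 = b), ψ y) = pairD (m2 (μp (m-1))) (m1 (μp 0)) t (a, b)) := by
  induction m, hm using Nat.le_induction with
  | base =>
    intro μp t hd _ _ hineq
    have ht : t = corr (μp 0) := by
      have h1 := hineq (fun _ => true)
      have h2 := hineq (fun _ => false)
      simp at h1 h2
      linarith
    refine ⟨fun y => μp 0 (y 0, y 1), ⟨fun y => (hd 0 (by omega)).1 _, ?_⟩, ?_, ?_⟩
    · rw [← Equiv.sum_comp (finTwoArrowEquiv Bool).symm (fun y : Fin 2 → Bool => μp 0 (y 0, y 1))]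
      rw [Fintype.sum_prod_type]
      have := (hd 0 (by omega)).2
      rw [Fintype.sum_prod_type] at this
      simpa [finTwoArrowEquiv] using this
    · intro k hk a b
      interval_cases k
      rw [Finset.sum_filter,
        ← Equiv.sum_comp (finTwoArrowEquiv Bool).symm
          (fun y : Fin 2 → Bool => if y ⟨0, by omega⟩ = a ∧ y ⟨0+1, by omega⟩ = b then μp 0 (y 0, y 1) else 0)]
      rw [Fintype.sum_prod_type]
      have h0 : (⟨0, by omega⟩ : Fin 2) = 0 := rfl
      have h1 : (⟨0+1, by omega⟩ : Fin 2) = 1 := rfl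
      simp only [h0, h1, finTwoArrowEquiv, Equiv.coe_fn_symm_mk, Matrix.cons_val_zero,
        Matrix.cons_val_one, Matrix.head_cons]
      rw [Fintype.sum_bool, Fintype.sum_bool]
      cases a <;> cases b <;> simp
    · intro a b
      have hsum := (hd 0 (by omega)).2
      have key : μp 0 (b, a) = pairD (m2 (μp (1-1))) (m1 (μp 0)) t (a, b) := by
        rw [dist_pt hsum b a, ht]
        show _ = pairD (m2 (μp 0)) (m1 (μp 0)) _ (a, b)
        simp only [pairD]
        cases a <;> cases b <;> simp <;> ring
      rw [Finset.sum_filter,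
        ← Equiv.sum_comp (finTwoArrowEquiv Bool).symm
          (fun y : Fin 2 → Bool => if y ⟨1, by omega⟩ = a ∧ y 0 = b then μp 0 (y 0, y 1) else 0)]
      rw [Fintype.sum_prod_type]
      have h1 : (⟨1, by omega⟩ : Fin 2) = 1 := rfl
      simp only [h1, finTwoArrowEquiv, Equiv.coe_fn_symm_mk, Matrix.cons_val_zero,
        Matrix.cons_val_one, Matrix.head_cons]
      cases a <;> cases b <;> (rw [Fintype.sum_bool, Fintype.sum_bool]; simpa using key)
  | succ m hm IH =>
    intro μp t hd hcons hok0 hineq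
    simp only [Nat.add_sub_cancel] at hok0
    -- abbreviations
    set eL : ℝ := m2 (μp m) with heL
    set eE : ℝ := m1 (μp m) with heE
    set e0 : ℝ := m1 (μp 0) with he0
    set cm : ℝ := corr (μp m) with hcm
    have hEm : eE = m2 (μp (m-1)) := by
      rw [heE]
      have := m1_eq_m2 (μp := μp) (j := m - 1)
        (fun a => by
          have h := hcons (m-1) a (by omega)
          simpa [Nat.sub_add_cancel hm] using h)
      simpa [Nat.sub_add_cancel hm] using this
    obtain ⟨hA1, hA2, hA3, hA4⟩ := pairOK_of_isDist (hd m (by omega))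
    obtain ⟨hB1, hB2, hB3, hB4⟩ := hok0
    obtain ⟨hC1, hC2, hC3, hC4⟩ := pairOK_of_isDist (hd 0 (by omega))
    rw [← heE, ← heL, ← hcm] at hA1 hA2 hA3 hA4
    rw [← he0] at hC1 hC2 hC3 hC4
    -- interval endpoints
    set L : ℝ := max |eE + e0| |cm + t| - 1 with hLdef
    set U : ℝ := 1 - max |eE - e0| |cm - t| with hUdef
    have hLval : L = max |eE + e0| |cm + t| - 1 := rfl
    have hUval : U = 1 - max |eE - e0| |cm - t| := rfl
    have hLU : L ≤ U := by
      have hAA : |eE + e0| + |eE - e0| ≤ 2 := by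
        rcases abs_cases (eE + e0) with ⟨g1, _⟩ | ⟨g1, _⟩ <;>
          rcases abs_cases (eE - e0) with ⟨k1, _⟩ | ⟨k1, _⟩ <;> linarith
      have hBB : |cm + t| + |cm - t| ≤ 2 := by
        rcases abs_cases (cm + t) with ⟨g1, _⟩ | ⟨g1, _⟩ <;>
          rcases abs_cases (cm - t) with ⟨k1, _⟩ | ⟨k1, _⟩ <;> linarith
      have hAB : |eE + e0| + |cm - t| ≤ 2 := by
        rcases abs_cases (eE + e0) with ⟨g1, _⟩ | ⟨g1, _⟩ <;>
          rcases abs_cases (cm - t) with ⟨k1, _⟩ | ⟨k1, _⟩ <;> linarith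
      have hBA : |eE - e0| + |cm + t| ≤ 2 := by
        rcases abs_cases (eE - e0) with ⟨g1, _⟩ | ⟨g1, _⟩ <;>
          rcases abs_cases (cm + t) with ⟨k1, _⟩ | ⟨k1, _⟩ <;> linarith
      have : max |eE + e0| |cm + t| + max |eE - e0| |cm - t| ≤ 2 := by
        rcases max_cases |eE + e0| |cm + t| with ⟨h1', _⟩ | ⟨h1', _⟩ <;>
          rcases max_cases |eE - e0| |cm - t| with ⟨h2', _⟩ | ⟨h2', _⟩ <;>
          rw [h1', h2'] <;> linarith
      linarith [hLval, hUval, this]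
    -- sign vector machinery
    set S : Finset (Fin m → Bool) := univ.filter (fun σb => (∏ k, sgn (σb k)) = 1) with hSdef
    have hSne : S.Nonempty := ⟨fun _ => true, by simp [hSdef]⟩
    set Bv : ℝ := S.sup' hSne (fun σb => ∑ k : Fin m, sgn (σb k) * corr (μp k.val)) with hBvdef
    set t' : ℝ := max L (Bv - ((m : ℝ) - 1)) with ht'def
    have ht'val : t' = max L (Bv - ((m : ℝ) - 1)) := rfl
    -- ℕ-extension of Fin m sign vectors
    have hext_sum : ∀ σb : Fin m → Bool,
        (∑ k ∈ range m, sgn ((fun j => if h : j < m then σb ⟨j, h⟩ else true) k) * corr (μp k))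
          = ∑ k : Fin m, sgn (σb k) * corr (μp k.val) := by
      intro σb
      rw [← Fin.sum_univ_eq_sum_range]
      exact Finset.sum_congr rfl fun k _ => by simp
    have hext_prod : ∀ σb : Fin m → Bool,
        (∏ k ∈ range m, sgn ((fun j => if h : j < m then σb ⟨j, h⟩ else true) k))
          = ∏ k : Fin m, sgn (σb k) := by
      intro σb
      rw [← Fin.prod_univ_eq_prod_range]
      exact Finset.prod_congr rfl fun k _ => by simp
    -- instantiation of the main inequality
    have Hwt : ∀ (σ : ℕ → Bool) (w : Bool),
        (∑ k ∈ range m, sgn (σ k) * corr (μp k)) + sgn w * cm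
          - t * ((∏ k ∈ range m, sgn (σ k)) * sgn w) ≤ (m : ℝ) := by
      intro σ w
      have h := hineq (Function.update σ m w)
      rw [Finset.sum_range_succ, Finset.prod_range_succ] at h
      rw [Finset.sum_congr rfl (fun k hk => by
            rw [Function.update_of_ne (by simp at hk; omega) w σ]),
          Finset.prod_congr rfl (fun k hk => by
            rw [Function.update_of_ne (by simp at hk; omega) w σ])] at h
      rw [Function.update_self] at h
      push_cast at h
      rw [hcm]
      linarith
    -- telescoping bound
    have hTel : ∀ σ : ℕ → Bool,
        |(∏ k ∈ range m, sgn (σ k)) * eE - e0| ≤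
          (m : ℝ) - ∑ k ∈ range m, sgn (σ k) * corr (μp k) := by
      intro σ
      have h := telescope m hm μp (fun k hk => hd k (by omega))
        (fun k a hk => hcons k a (by omega)) σ
      rw [← hEm, ← he0] at h
      have hs : ∑ k ∈ range m, (1 - sgn (σ k) * corr (μp k)) =
          (m : ℝ) - ∑ k ∈ range m, sgn (σ k) * corr (μp k) := by
        rw [Finset.sum_sub_distrib, Finset.sum_const, card_range]
        push_cast; ring
      rw [hs] at h
      exact h
    -- |corr| ≤ 1 bounds
    have hck : ∀ k, k < m + 1 → -1 ≤ corr (μp k) ∧ corr (μp k) ≤ 1 := by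
      intro k hk
      obtain ⟨u1, u2, u3, u4⟩ := pairOK_of_isDist (hd k hk)
      constructor <;> linarith
    -- (3) : Bv - (m-1) ≤ U
    have hBU : Bv - ((m : ℝ) - 1) ≤ U := by
      rw [sub_le_iff_le_add, hBvdef]
      apply Finset.sup'_le
      intro σb hσb
      have hP : (∏ k : Fin m, sgn (σb k)) = 1 := (mem_filter.mp hσb).2
      have h3a : (∑ k : Fin m, sgn (σb k) * corr (μp k.val)) + |cm - t| ≤ (m : ℝ) := by
        have hw1 := Hwt (fun j => if h : j < m then σb ⟨j, h⟩ else true) true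
        have hw2 := Hwt (fun j => if h : j < m then σb ⟨j, h⟩ else true) false
        rw [hext_sum, hext_prod, hP] at hw1 hw2
        simp only [sgn_true, sgn_false, one_mul, mul_one, mul_neg, neg_mul] at hw1 hw2
        rcases abs_cases (cm - t) with ⟨hh, _⟩ | ⟨hh, _⟩ <;> rw [hh] <;> linarith
      have h3b : (∑ k : Fin m, sgn (σb k) * corr (μp k.val)) + |eE - e0| ≤ (m : ℝ) := by
        have hw := hTel (fun j => if h : j < m then σb ⟨j, h⟩ else true)
        rw [hext_sum, hext_prod, hP, one_mul] at hw
        linarith [hw]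
      rw [hUdef]
      rcases max_cases |eE - e0| |cm - t| with ⟨h1', _⟩ | ⟨h1', _⟩ <;> rw [h1'] <;> linarith
    -- (4)+(2) : odd signs bound t' from above
    have hT'le : ∀ σ : ℕ → Bool, (∏ k ∈ range m, sgn (σ k)) = -1 →
        (∑ k ∈ range m, sgn (σ k) * corr (μp k)) + t' ≤ (m : ℝ) - 1 := by
      intro σ hP
      have goal1 : L ≤ (m : ℝ) - 1 - ∑ k ∈ range m, sgn (σ k) * corr (μp k) := by
        have h4a : (∑ k ∈ range m, sgn (σ k) * corr (μp k)) + |cm + t| ≤ (m : ℝ) := by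
          have hw1 := Hwt σ true
          have hw2 := Hwt σ false
          rw [hP] at hw1 hw2
          simp only [sgn_true, sgn_false, one_mul, mul_one, mul_neg, neg_mul] at hw1 hw2
          rcases abs_cases (cm + t) with ⟨hh, _⟩ | ⟨hh, _⟩ <;> rw [hh] <;> linarith
        have h4b : (∑ k ∈ range m, sgn (σ k) * corr (μp k)) + |eE + e0| ≤ (m : ℝ) := by
          have hw := hTel σ
          rw [hP] at hw
          have he : |(-1 : ℝ) * eE - e0| = |eE + e0| := by
            rw [show (-1 : ℝ) * eE - e0 = -(eE + e0) by ring, abs_neg]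
          rw [he] at hw
          linarith
        rw [hLval]
        rcases max_cases |eE + e0| |cm + t| with ⟨h1', _⟩ | ⟨h1', _⟩ <;> rw [h1'] <;> linarith
      have goal2 : Bv - ((m : ℝ) - 1) ≤ (m : ℝ) - 1 - ∑ k ∈ range m, sgn (σ k) * corr (μp k) := by
        rw [sub_le_iff_le_add, hBvdef]
        apply Finset.sup'_le
        intro σb hσb
        have hP2 : (∏ k : Fin m, sgn (σb k)) = 1 := (mem_filter.mp hσb).2
        have hne : ∃ j : Fin m, σb j ≠ σ j.val := by
          by_contra hcon
          push_neg at hcon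
          have he : (∏ k : Fin m, sgn (σb k)) = ∏ k ∈ range m, sgn (σ k) := by
            rw [← Fin.prod_univ_eq_prod_range]
            exact Finset.prod_congr rfl fun k _ => by rw [hcon k]
          rw [hP2, hP] at he
          norm_num at he
        obtain ⟨j, hj⟩ := hne
        have hcomb : (∑ k : Fin m, sgn (σb k) * corr (μp k.val))
            + (∑ k ∈ range m, sgn (σ k) * corr (μp k))
            = ∑ k : Fin m, (sgn (σb k) + sgn (σ k.val)) * corr (μp k.val) := by
          rw [← Fin.sum_univ_eq_sum_range (fun j => sgn (σ j) * corr (μp j)) m,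
            ← Finset.sum_add_distrib]
          exact Finset.sum_congr rfl fun k _ => by ring
        have hterm0 : (sgn (σb j) + sgn (σ j.val)) * corr (μp j.val) = 0 := by
          have hz : sgn (σb j) + sgn (σ j.val) = 0 := by
            revert hj; cases σb j <;> cases σ j.val <;> simp
          rw [hz, zero_mul]
        have hbound : ∀ k : Fin m, (sgn (σb k) + sgn (σ k.val)) * corr (μp k.val) ≤ 2 := by
          intro k
          have hc := hck k.val (by omega)
          cases σb k <;> cases σ k.val <;> simp <;> linarith
        have hsplit : ∑ k : Fin m, (sgn (σb k) + sgn (σ k.val)) * corr (μp k.val)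
            = (sgn (σb j) + sgn (σ j.val)) * corr (μp j.val)
              + ∑ k ∈ univ.erase j, (sgn (σb k) + sgn (σ k.val)) * corr (μp k.val) :=
          (Finset.add_sum_erase univ _ (mem_univ j)).symm
        have herase : ∑ k ∈ univ.erase j, (sgn (σb k) + sgn (σ k.val)) * corr (μp k.val)
            ≤ ((m : ℝ) - 1) * 2 := by
          calc ∑ k ∈ univ.erase j, (sgn (σb k) + sgn (σ k.val)) * corr (μp k.val)
              ≤ ∑ _k ∈ univ.erase j, (2 : ℝ) :=
                Finset.sum_le_sum (fun k _ => hbound k)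
            _ = ((univ.erase j).card : ℝ) * 2 := by rw [Finset.sum_const]; ring
            _ = ((m : ℝ) - 1) * 2 := by
                rw [Finset.card_erase_of_mem (mem_univ j), card_univ, Fintype.card_fin]
                have : (1 : ℕ) ≤ m := hm
                push_cast [Nat.cast_sub this]
                ring
        have hsum_le : (∑ k : Fin m, (sgn (σb k) + sgn (σ k.val)) * corr (μp k.val))
            ≤ ((m : ℝ) - 1) * 2 := by
          rw [hsplit, hterm0, zero_add]; exact herase
        linarith [hcomb, hsum_le]
      have hfin := max_le goal1 goal2
      rw [ht'val] at *
      linarith [hfin]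
    have hLt' : L ≤ t' := le_max_left _ _
    have ht'U : t' ≤ U := max_le hLU hBU
    have habs1 : |eE + e0| ≤ 1 + t' := by
      have h := le_max_left |eE + e0| |cm + t|
      linarith [hLval, hLt']
    have habs2 : |eE - e0| ≤ 1 - t' := by
      have h := le_max_left |eE - e0| |cm - t|
      linarith [hUval, ht'U]
    have hT'pair : PairOK eE e0 t' := by
      rcases abs_le.mp habs1 with ⟨u1, u2⟩
      rcases abs_le.mp habs2 with ⟨v1, v2⟩
      exact ⟨by linarith, by linarith, by linarith, by linarith⟩
    -- apply IH
    have hineq' : ∀ σ : ℕ → Bool,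
        (∑ k ∈ range m, sgn (σ k) * corr (μp k)) - t' * ∏ k ∈ range m, sgn (σ k)
          ≤ (m : ℝ) - 1 := by
      intro σ
      rcases prod_sgn_pm (range m) σ with hP | hP
      · rw [hP, mul_one]
        have hmem : (fun k : Fin m => σ k.val) ∈ S := by
          rw [hSdef]
          refine mem_filter.mpr ⟨mem_univ _, ?_⟩
          rw [show (∏ k : Fin m, sgn (σ k.val)) = ∏ k ∈ range m, sgn (σ k) from
            Fin.prod_univ_eq_prod_range (fun j => sgn (σ j)) m]
          exact hP
        have hle := Finset.le_sup'
          (fun σb : Fin m → Bool => ∑ k : Fin m, sgn (σb k) * corr (μp k.val)) hmem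
        rw [show (∑ k : Fin m, sgn (σ k.val) * corr (μp k.val))
            = ∑ k ∈ range m, sgn (σ k) * corr (μp k) from
          Fin.sum_univ_eq_sum_range (fun j => sgn (σ j) * corr (μp j)) m] at hle
        have : Bv - ((m : ℝ) - 1) ≤ t' := le_max_right _ _
        rw [← hBvdef] at hle
        linarith
      · have h := hT'le σ hP
        rw [hP, mul_neg_one]
        linarith
    have hok' : PairOK (m2 (μp (m-1))) (m1 (μp 0)) t' := by
      rw [← hEm, ← he0]; exact hT'pair
    obtain ⟨ψ', hψd, hψctx, hψcl⟩ :=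
      IH μp t' (fun k hk => hd k (by omega)) (fun k a hk => hcons k a (by omega)) hok' hineq'
    -- the coupling fiber distribution
    set lam : Bool → Bool → ℝ := fun u v => pairD eE e0 t' (u, v) with hlamdef
    have hψcl' : ∀ a b : Bool,
        (∑ y ∈ univ.filter (fun y : Fin (m+1) → Bool =>
            y ⟨m, by omega⟩ = a ∧ y 0 = b), ψ' y) = lam a b := by
      intro a b
      rw [hψcl a b, hlamdef, ← hEm, ← he0]
    have hlamnn : ∀ u v, 0 ≤ lam u v := fun u v => pairD_nonneg hT'pair (u, v)
    -- the triple coupling construction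
    set q : Bool → ℝ := fun x => (1 + sgn x * eL) / 2 with hqdef
    set al : Bool → ℝ := fun x => (eE + sgn x * cm) / 2 with haldef
    set be : Bool → ℝ := fun x => (e0 + sgn x * t) / 2 with hbedef
    set th : ℝ := if L < U then (U - t') / (U - L) else 1 with hthdef
    have hthval : th = if L < U then (U - t') / (U - L) else 1 := rfl
    have hth0 : 0 ≤ th := by
      rw [hthval]; split_ifs with h
      · apply div_nonneg <;> linarith
      · norm_num
    have hth1 : th ≤ 1 := by
      rw [hthval]; split_ifs with h
      · rw [div_le_one (by linarith)]; linarith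
      · exact le_refl 1
    set tx : Bool → ℝ :=
      fun x => th * (|al x + be x| - q x) + (1 - th) * (q x - |al x - be x|) with htxdef
    have habs2' : ∀ x : ℝ, |x / 2| = |x| / 2 := fun x => by rw [abs_div, abs_two]
    have hABsum : |al true + be true| + |al false + be false| = max |eE + e0| |cm + t| := by
      have e1 : al true + be true = ((eE + e0) + (cm + t)) / 2 := by
        simp only [haldef, hbedef]; simp; ring
      have e2 : al false + be false = ((eE + e0) - (cm + t)) / 2 := by
        simp only [haldef, hbedef]; simp; ring
      rw [e1, e2, habs2', habs2', maxabs]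
    have hABdiff : |al true - be true| + |al false - be false| = max |eE - e0| |cm - t| := by
      have e1 : al true - be true = ((eE - e0) + (cm - t)) / 2 := by
        simp only [haldef, hbedef]; simp; ring
      have e2 : al false - be false = ((eE - e0) - (cm - t)) / 2 := by
        simp only [haldef, hbedef]; simp; ring
      rw [e1, e2, habs2', habs2', maxabs]
    have hq1 : q true + q false = 1 := by simp only [hqdef, sgn_true, sgn_false]; ring
    have hal1 : al true + al false = eE := by simp only [haldef]; simp; ring
    have hbe1 : be true + be false = e0 := by simp only [hbedef]; simp; ring
    have htx1 : tx true + tx false = t' := by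
      have e : tx true + tx false =
          th * ((|al true + be true| + |al false + be false|) - (q true + q false))
          + (1 - th) * ((q true + q false) - (|al true - be true| + |al false - be false|)) := by
        simp only [htxdef]; ring
      rw [e, hABsum, hABdiff, hq1, ← hLval, ← hUval]
      by_cases h : L < U
      · have hthh : th = (U - t') / (U - L) := by rw [hthval, if_pos h]
        have hne : U - L ≠ 0 := ne_of_gt (by linarith)
        rw [hthh]
        field_simp
        ring
      · have hLeqU : L = U := le_antisymm hLU (not_lt.mp h)
        have ht'L : t' = L := le_antisymm (hLeqU ▸ ht'U) hLt'
        have hthh : th = 1 := by rw [hthval, if_neg h]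
        rw [hthh, ht'L]; ring
    have halq : ∀ x, |al x| ≤ q x := by
      intro x
      simp only [haldef, hqdef]
      rcases sgn_cases x with hs | hs <;> rw [hs, habs2']
      · rcases abs_cases (eE + 1 * cm) with ⟨e, _⟩ | ⟨e, _⟩ <;> linarith
      · rcases abs_cases (eE + -1 * cm) with ⟨e, _⟩ | ⟨e, _⟩ <;> linarith
    have hbeq : ∀ x, |be x| ≤ q x := by
      intro x
      simp only [hbedef, hqdef]
      rcases sgn_cases x with hs | hs <;> rw [hs, habs2']
      · rcases abs_cases (e0 + 1 * t) with ⟨e, _⟩ | ⟨e, _⟩ <;> linarith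
      · rcases abs_cases (e0 + -1 * t) with ⟨e, _⟩ | ⟨e, _⟩ <;> linarith
    have hlu : ∀ x, |al x + be x| - q x ≤ q x - |al x - be x| := by
      intro x
      have h := maxabs (al x) (be x)
      have h2 : max |al x| |be x| ≤ q x := max_le (halq x) (hbeq x)
      linarith
    have htxmem : ∀ x, |al x + be x| - q x ≤ tx x ∧ tx x ≤ q x - |al x - be x| := by
      intro x
      have hl := hlu x
      have e1 : tx x - (|al x + be x| - q x)
          = (1 - th) * ((q x - |al x - be x|) - (|al x + be x| - q x)) := by
        simp only [htxdef]; ring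
      have e2 : (q x - |al x - be x|) - tx x
          = th * ((q x - |al x - be x|) - (|al x + be x| - q x)) := by
        simp only [htxdef]; ring
      have p1 := mul_nonneg (by linarith : (0:ℝ) ≤ 1 - th)
        (by linarith : (0:ℝ) ≤ (q x - |al x - be x|) - (|al x + be x| - q x))
      have p2 := mul_nonneg hth0
        (by linarith : (0:ℝ) ≤ (q x - |al x - be x|) - (|al x + be x| - q x))
      constructor <;> linarith [e1, e2, p1, p2]
    have hτnn : ∀ u x v, 0 ≤ tau q al be tx u x v := fun u x v => tau_nonneg htxmem u x v
    have hτ12 : ∀ u x, (∑ v, tau q al be tx u x v) = μp m (u, x) := by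
      intro u x
      rw [tau_sum3, dist_pt (hd m (by omega)).2 u x, ← heE, ← heL, ← hcm]
      simp only [pairD, hqdef, haldef]
      ring
    have hτ23 : ∀ x v, (∑ u, tau q al be tx u x v) = pairD eL e0 t (x, v) := by
      intro x v
      rw [tau_sum1]
      simp only [pairD, hqdef, hbedef]
      ring
    have hτ13 : ∀ u v, (∑ x, tau q al be tx u x v) = lam u v := by
      intro u v
      rw [tau_sum2, hq1, hal1, hbe1, htx1, hlamdef]
      simp only [pairD]
    have hτ0 : ∀ u v x, lam u v = 0 → tau q al be tx u x v = 0 := by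
      intro u v x h
      have h1 : tau q al be tx u x v ≤ ∑ x', tau q al be tx u x' v :=
        Finset.single_le_sum (fun x' _ => hτnn u x' v) (mem_univ x)
      rw [hτ13, h] at h1
      exact le_antisymm h1 (hτnn u x v)
    -- the conditional kernel
    set hh : Bool → Bool → Bool → ℝ :=
      fun u x v => if lam u v = 0 then 0 else tau q al be tx u x v / lam u v with hhdef
    have hhval : ∀ u x v,
        hh u x v = if lam u v = 0 then 0 else tau q al be tx u x v / lam u v :=
      fun _ _ _ => rfl
    have hhnn : ∀ u x v, 0 ≤ hh u x v := by
      intro u x v; rw [hhval]; split_ifs with h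
      · exact le_refl 0
      · exact div_nonneg (hτnn u x v) (hlamnn u v)
    have hhmid : ∀ u v, lam u v ≠ 0 → (∑ x, hh u x v) = 1 := by
      intro u v h
      rw [Finset.sum_congr rfl fun x _ => by rw [hhval, if_neg h]]
      rw [← Finset.sum_div, hτ13, div_self h]
    have hψ0 : ∀ y' : Fin (m+1) → Bool, lam (y' ⟨m, by omega⟩) (y' 0) = 0 → ψ' y' = 0 := by
      intro y' h
      have hcl := hψcl' (y' ⟨m, by omega⟩) (y' 0)
      rw [h] at hcl
      exact (Finset.sum_eq_zero_iff_of_nonneg (fun y _ => hψd.1 y)).mp hcl y'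
        (mem_filter.mpr ⟨mem_univ _, rfl, rfl⟩)
    -- snoc splitting
    have hbij : Function.Bijective
        (fun p : (Fin (m+1) → Bool) × Bool => (Fin.snoc p.1 p.2 : Fin (m+2) → Bool)) := by
      constructor
      · rintro ⟨y1, w1⟩ ⟨y2, w2⟩ hpe
        have h2 : w1 = w2 := by
          have := congrArg (fun f : Fin (m+2) → Bool => f (Fin.last (m+1))) hpe
          simpa using this
        have h1 : y1 = y2 := by
          funext i
          have := congrArg (fun f : Fin (m+2) → Bool => f i.castSucc) hpe
          simpa using this
        simp [h1, h2]
      · intro y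
        exact ⟨(fun i => y i.castSucc, y (Fin.last (m+1))), Fin.snoc_init_self y⟩
    have hsplitEq : ∀ g : (Fin (m+2) → Bool) → ℝ,
        (∑ y, g y) = ∑ y' : Fin (m+1) → Bool, ∑ w : Bool, g (Fin.snoc y' w) := by
      intro g
      rw [← Function.Bijective.sum_comp hbij g, Fintype.sum_prod_type]
    have hcoord : ∀ (k : ℕ) (hk : k < m + 1) (y' : Fin (m+1) → Bool) (w : Bool),
        (Fin.snoc y' w : Fin (m+2) → Bool) ⟨k, by omega⟩ = y' ⟨k, hk⟩ := by
      intro k hk y' w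
      have h : (⟨k, by omega⟩ : Fin (m+2)) = Fin.castSucc ⟨k, hk⟩ := rfl
      rw [h, Fin.snoc_castSucc]
    have hcoord0 : ∀ (y' : Fin (m+1) → Bool) (w : Bool),
        (Fin.snoc y' w : Fin (m+2) → Bool) 0 = y' 0 := by
      intro y' w
      have h : (0 : Fin (m+2)) = Fin.castSucc (0 : Fin (m+1)) := by
        apply Fin.ext; simp
      rw [h, Fin.snoc_castSucc]
    have hcoordL : ∀ (y' : Fin (m+1) → Bool) (w : Bool),
        (Fin.snoc y' w : Fin (m+2) → Bool) (Fin.last (m+1)) = w := by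
      intro y' w; simp
    set Mi : Fin (m+1) := ⟨m, by omega⟩ with hMidef
    set ν : (Fin (m+2) → Bool) → ℝ :=
      fun y => ψ' (fun i => y i.castSucc) * hh (y ⟨m, by omega⟩) (y (Fin.last (m+1))) (y 0)
      with hνdef
    have hν_snoc : ∀ (y' : Fin (m+1) → Bool) (w : Bool),
        ν (Fin.snoc y' w) = ψ' y' * hh (y' Mi) w (y' 0) := by
      intro y' w
      rw [hνdef]
      have h1 : (fun i => (Fin.snoc y' w : Fin (m+2) → Bool) (Fin.castSucc i)) = y' := funext fun i => by simp
      show ψ' (fun i => (Fin.snoc y' w : Fin (m+2) → Bool) (Fin.castSucc i)) * _ = _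
      rw [h1, hcoord m (by omega) y' w, hcoordL y' w, hcoord0 y' w]
    have hpt : ∀ y' : Fin (m+1) → Bool, ψ' y' * (∑ w, hh (y' Mi) w (y' 0)) = ψ' y' := by
      intro y'
      by_cases h : lam (y' Mi) (y' 0) = 0
      · rw [hψ0 y' h]; ring
      · rw [hhmid _ _ h, mul_one]
    refine ⟨ν, ⟨fun y => mul_nonneg (hψd.1 _) (hhnn _ _ _), ?_⟩, ?_, ?_⟩
    · rw [hsplitEq ν]
      rw [Finset.sum_congr rfl fun (y' : Fin (m+1) → Bool) _ => show (∑ w, ν (Fin.snoc y' w)) = ψ' y' from by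
        rw [Finset.sum_congr rfl fun w _ => hν_snoc y' w, ← Finset.mul_sum]
        exact hpt y']
      exact hψd.2
    · intro k hk a b
      rcases Nat.lt_or_ge k m with hkm | hkm
      · -- inherited contexts
        rw [Finset.sum_filter, hsplitEq]
        have step : ∀ y' : Fin (m+1) → Bool,
            (∑ w, if (Fin.snoc y' w : Fin (m+2) → Bool) ⟨k, by omega⟩ = a ∧ (Fin.snoc y' w : Fin (m+2) → Bool) ⟨k+1, by omega⟩ = b
              then ν (Fin.snoc y' w) else 0)
            = if y' ⟨k, by omega⟩ = a ∧ y' ⟨k+1, by omega⟩ = b then ψ' y' else 0 := by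
          intro y'
          rw [Finset.sum_congr rfl fun w _ => by
            rw [hcoord k (by omega) y' w, hcoord (k+1) (by omega) y' w, hν_snoc y' w]]
          split_ifs with h
          · rw [← Finset.mul_sum]; exact hpt y'
          · simp
        refine Eq.trans (Finset.sum_congr rfl fun y' _ => step y') ?_
        rw [← Finset.sum_filter]
        exact hψctx k hkm a b
      · -- the context m
        have hk' : k = m := by omega
        subst hk'
        calc (∑ y ∈ univ.filter (fun y : Fin (k+2) → Bool =>
                y ⟨k, by omega⟩ = a ∧ y ⟨k+1, by omega⟩ = b), ν y)
            = ∑ y' : Fin (k+1) → Bool, ∑ w : Bool,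
                (if y' Mi = a ∧ w = b then ψ' y' * hh (y' Mi) w (y' 0) else 0) := by
              rw [Finset.sum_filter, hsplitEq]
              refine Finset.sum_congr rfl fun y' _ => Finset.sum_congr rfl fun w _ => ?_
              rw [hcoord k (by omega) y' w,
                show (⟨k+1, by omega⟩ : Fin (k+2)) = Fin.last (k+1) from rfl,
                hcoordL y' w, hν_snoc y' w]
          _ = ∑ y' : Fin (k+1) → Bool,
                (if y' Mi = a then ψ' y' * hh a b (y' 0) else 0) := by
              refine Finset.sum_congr rfl fun y' _ => ?_
              by_cases h : y' Mi = a
              · simp only [h, true_and]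
                rw [Fintype.sum_bool]
                cases b <;> simp
              · simp [h]
          _ = ∑ y' : Fin (k+1) → Bool, ∑ v : Bool,
                (if y' Mi = a ∧ y' 0 = v then ψ' y' else 0) * hh a b v := by
              refine Finset.sum_congr rfl fun y' _ => ?_
              rw [Fintype.sum_bool]
              by_cases h : y' Mi = a
              · cases hv : y' 0 <;> simp [h, hv]
              · simp [h]
          _ = ∑ v : Bool, ∑ y' : Fin (k+1) → Bool,
                (if y' Mi = a ∧ y' 0 = v then ψ' y' else 0) * hh a b v := Finset.sum_comm
          _ = ∑ v : Bool, lam a v * hh a b v := by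
              refine Finset.sum_congr rfl fun v _ => ?_
              rw [← Finset.sum_mul]
              congr 1
              rw [← Finset.sum_filter]
              exact hψcl' a v
          _ = ∑ v : Bool, tau q al be tx a b v := by
              refine Finset.sum_congr rfl fun v _ => ?_
              by_cases h : lam a v = 0
              · rw [h, zero_mul, hτ0 a v b h]
              · rw [hhval, if_neg h]; field_simp
          _ = μp k (a, b) := hτ12 a b
    · -- the closing pair
      intro a b
      simp only [Nat.add_sub_cancel]
      rw [← heL]
      calc (∑ y ∈ univ.filter (fun y : Fin (m+2) → Bool =>
              y ⟨m+1, by omega⟩ = a ∧ y 0 = b), ν y)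
          = ∑ y' : Fin (m+1) → Bool, ∑ w : Bool,
              (if w = a ∧ y' 0 = b then ψ' y' * hh (y' Mi) w (y' 0) else 0) := by
            rw [Finset.sum_filter, hsplitEq]
            refine Finset.sum_congr rfl fun y' _ => Finset.sum_congr rfl fun w _ => ?_
            rw [show (⟨m+1, by omega⟩ : Fin (m+2)) = Fin.last (m+1) from rfl,
              hcoordL y' w, hcoord0 y' w, hν_snoc y' w]
        _ = ∑ y' : Fin (m+1) → Bool,
              (if y' 0 = b then ψ' y' * hh (y' Mi) a b else 0) := by
            refine Finset.sum_congr rfl fun y' _ => ?_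
            by_cases h : y' 0 = b
            · simp only [h, and_true]
              rw [Fintype.sum_bool]
              cases a <;> simp [h]
            · simp [h]
        _ = ∑ y' : Fin (m+1) → Bool, ∑ u : Bool,
              (if y' Mi = u ∧ y' 0 = b then ψ' y' else 0) * hh u a b := by
            refine Finset.sum_congr rfl fun y' _ => ?_
            rw [Fintype.sum_bool]
            by_cases h : y' 0 = b
            · cases hu : y' Mi <;> simp [h, hu]
            · simp [h]
        _ = ∑ u : Bool, ∑ y' : Fin (m+1) → Bool,
              (if y' Mi = u ∧ y' 0 = b then ψ' y' else 0) * hh u a b := Finset.sum_comm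
        _ = ∑ u : Bool, lam u b * hh u a b := by
            refine Finset.sum_congr rfl fun u _ => ?_
            rw [← Finset.sum_mul]
            congr 1
            rw [← Finset.sum_filter]
            exact hψcl' u b
        _ = ∑ u : Bool, tau q al be tx u a b := by
            refine Finset.sum_congr rfl fun u _ => ?_
            by_cases h : lam u b = 0
            · rw [h, zero_mul, hτ0 u b a h]
            · rw [hhval, if_neg h]; field_simp
        _ = pairD eL e0 t (a, b) := hτ23 a b



end
end Cyc

section
open Cyc
open Fin.NatCast

/-- A consistently connected cyclic system of rank `n` of `±1`-valued variables is
noncontextual iff `s_odd` of the `n` within-context expectations of products is at most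
`n - 2`. Here `μ k` is the joint distribution of `(R k, R (k+1))` in context `k`
(indices mod `n`, with `true ↦ +1`, `false ↦ -1`). -/
theorem stmt9 (n : ℕ) [NeZero n] (hn : 2 ≤ n) (μ : Fin n → (Bool × Bool → ℝ))
    (hdist : ∀ k, IsDist (μ k))
    (hcc : ∀ (k : Fin n) (a : Bool), ∑ b, μ k (a, b) = ∑ b, μ (k - 1) (b, a)) :
    (∃ ν : (Fin n → Bool) → ℝ, IsDist ν ∧
        ∀ (k : Fin n) (a b : Bool),
          ∑ y ∈ Finset.univ.filter (fun y : Fin n → Bool => y k = a ∧ y (k + 1) = b), ν y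
            = μ k (a, b))
    ↔ ∀ s : Fin n → ℝ, (∀ k, s k = 1 ∨ s k = -1) → (∏ k, s k) = -1 →
        (∑ k, s k * ∑ a, ∑ b, sgn a * sgn b * μ k (a, b)) ≤ (n : ℝ) - 2 := by
  have hcexpr : ∀ p : Bool × Bool → ℝ, (∑ a, ∑ b, sgn a * sgn b * p (a, b)) = Cyc.corr p :=
    fun p => rfl
  constructor
  · -- noncontextual → inequality
    rintro ⟨ν, hν, hfib⟩ s hs hprod
    have hcorr : ∀ k : Fin n, (∑ a, ∑ b, sgn a * sgn b * μ k (a, b))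
        = ∑ y : Fin n → Bool, sgn (y k) * sgn (y (k+1)) * ν y := by
      intro k
      calc (∑ a, ∑ b, sgn a * sgn b * μ k (a, b))
          = ∑ a, ∑ b, ∑ y ∈ Finset.univ.filter
              (fun y : Fin n → Bool => y k = a ∧ y (k+1) = b),
              sgn (y k) * sgn (y (k+1)) * ν y := by
            refine Finset.sum_congr rfl fun a _ => Finset.sum_congr rfl fun b _ => ?_
            rw [← hfib k a b, Finset.mul_sum]
            refine Finset.sum_congr rfl fun y hy => ?_
            obtain ⟨-, h1, h2⟩ := Finset.mem_filter.mp hy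
            rw [h1, h2]
        _ = ∑ y : Fin n → Bool, sgn (y k) * sgn (y (k+1)) * ν y := by
            simp only [Finset.sum_filter]
            rw [Finset.sum_congr rfl fun a _ => Finset.sum_comm, Finset.sum_comm]
            refine Finset.sum_congr rfl fun y _ => ?_
            cases hyi : y k <;> cases hyj : y (k+1) <;>
              simp [hyi, hyj, Fintype.sum_bool]
    have hcore : ∀ y : Fin n → Bool,
        (∑ k : Fin n, s k * (sgn (y k) * sgn (y (k+1)))) ≤ (n : ℝ) - 2 := by
      intro y
      have hTpm : ∀ k : Fin n, s k * (sgn (y k) * sgn (y (k+1))) = 1 ∨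
          s k * (sgn (y k) * sgn (y (k+1))) = -1 := by
        intro k
        rcases hs k with h | h <;> rcases Cyc.sgn_cases (y k) with h1 | h1 <;>
          rcases Cyc.sgn_cases (y (k+1)) with h2 | h2 <;> rw [h, h1, h2] <;> norm_num
      have hprodT : (∏ k : Fin n, s k * (sgn (y k) * sgn (y (k+1)))) = -1 := by
        rw [Finset.prod_mul_distrib, Finset.prod_mul_distrib, hprod]
        have hshift : (∏ k : Fin n, sgn (y (k+1))) = ∏ k : Fin n, sgn (y k) :=
          Fintype.prod_equiv (Equiv.addRight (1 : Fin n)) _ _ (fun k => rfl)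
        rw [hshift, ← Finset.prod_mul_distrib]
        rw [Finset.prod_congr rfl fun k _ => Cyc.sgn_sq (y k), Finset.prod_const_one]
        ring
      have hex : ∃ k0 : Fin n, s k0 * (sgn (y k0) * sgn (y (k0+1))) = -1 := by
        by_contra hcon
        push_neg at hcon
        rw [Finset.prod_congr rfl fun k _ => (hTpm k).resolve_right (hcon k),
          Finset.prod_const_one] at hprodT
        norm_num at hprodT
      obtain ⟨k0, hk0⟩ := hex
      have hsplit := (Finset.add_sum_erase Finset.univ
        (fun k : Fin n => s k * (sgn (y k) * sgn (y (k+1)))) (Finset.mem_univ k0)).symm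
      have hbound : (∑ k ∈ Finset.univ.erase k0, s k * (sgn (y k) * sgn (y (k+1))))
          ≤ (n : ℝ) - 1 := by
        calc (∑ k ∈ Finset.univ.erase k0, s k * (sgn (y k) * sgn (y (k+1))))
            ≤ ∑ _k ∈ Finset.univ.erase k0, (1 : ℝ) :=
              Finset.sum_le_sum fun k _ => by
                rcases hTpm k with h | h <;> rw [h] <;> norm_num
          _ = (n : ℝ) - 1 := by
              rw [Finset.sum_const, Finset.card_erase_of_mem (Finset.mem_univ k0),
                Finset.card_univ, Fintype.card_fin]
              have h2 : 1 ≤ n := by omega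
              rw [nsmul_eq_mul, Nat.cast_sub h2]
              push_cast; ring
      rw [hsplit, hk0]
      linarith
    calc (∑ k : Fin n, s k * ∑ a, ∑ b, sgn a * sgn b * μ k (a, b))
        = ∑ k : Fin n, ∑ y : Fin n → Bool, s k * (sgn (y k) * sgn (y (k+1)) * ν y) := by
          refine Finset.sum_congr rfl fun k _ => ?_
          rw [hcorr k, Finset.mul_sum]
      _ = ∑ y : Fin n → Bool, ∑ k : Fin n, s k * (sgn (y k) * sgn (y (k+1)) * ν y) :=
          Finset.sum_comm
      _ ≤ ∑ y : Fin n → Bool, ((n : ℝ) - 2) * ν y := by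
          refine Finset.sum_le_sum fun y _ => ?_
          have he : (∑ k : Fin n, s k * (sgn (y k) * sgn (y (k+1)) * ν y))
              = (∑ k : Fin n, s k * (sgn (y k) * sgn (y (k+1)))) * ν y := by
            rw [Finset.sum_mul]
            exact Finset.sum_congr rfl fun k _ => by ring
          rw [he]
          exact mul_le_mul_of_nonneg_right (hcore y) (hν.1 y)
      _ = (n : ℝ) - 2 := by rw [← Finset.mul_sum, hν.2, mul_one]
  · -- inequality → noncontextual
    intro hineq
    obtain ⟨m, rfl⟩ : ∃ m, n = m + 1 := ⟨n - 1, by omega⟩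
    have hm : 1 ≤ m := by omega
    have hccM : ∀ k : Fin (m+1), m1 (μ k) = m2 (μ (k-1)) := by
      intro k
      rw [Cyc.m1, Cyc.m2]
      exact Finset.sum_congr rfl fun a _ => by rw [hcc k a]
    have hlastcast : ((m : ℕ) : Fin (m+1)) = Fin.last m := by
      apply Fin.ext
      simp [Fin.val_cast_of_lt (by omega : m < m + 1)]
    have hneg1 : (0 : Fin (m+1)) - 1 = Fin.last m := by
      have h1 : ((m : ℕ) : Fin (m+1)) + 1 = 0 := by
        rw [← Nat.cast_add_one, Fin.natCast_self]
      have h2 := eq_neg_of_add_eq_zero_left h1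
      rw [zero_sub, ← h2, hlastcast]
    have hsub1 : ((m : ℕ) : Fin (m+1)) - 1 = (((m - 1 : ℕ)) : Fin (m+1)) := by
      have h1 : ((m : ℕ) : Fin (m+1)) = (((m-1 : ℕ)) : Fin (m+1)) + 1 := by
        rw [← Nat.cast_add_one]
        congr 1
        omega
      rw [h1, add_sub_cancel_right]
    have e1 : m2 (μ (((m - 1 : ℕ)) : Fin (m+1))) = m1 (μ (Fin.last m)) := by
      rw [hccM (Fin.last m)]
      congr 2
      rw [← hsub1, hlastcast]
    have e2 : m2 (μ (Fin.last m)) = m1 (μ 0) := by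
      rw [hccM 0, hneg1]
    have hcons' : ∀ (k : ℕ) (a : Bool), k + 1 < m →
        (∑ b, μ (((k+1 : ℕ)) : Fin (m+1)) (a, b)) = ∑ b, μ ((k : ℕ) : Fin (m+1)) (b, a) := by
      intro k a hk
      have e : (((k+1 : ℕ)) : Fin (m+1)) = ((k : ℕ) : Fin (m+1)) + 1 := by push_cast; ring
      rw [hcc (((k+1 : ℕ)) : Fin (m+1)) a, e, add_sub_cancel_right]
    have hok : PairOK (m2 ((fun j : ℕ => μ (j : Fin (m+1))) (m-1)))
        (m1 ((fun j : ℕ => μ (j : Fin (m+1))) 0)) (corr (μ (Fin.last m))) := by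
      simp only []
      rw [e1, Nat.cast_zero, ← e2]
      exact pairOK_of_isDist (hdist (Fin.last m))
    have hineqP : ∀ σ : ℕ → Bool,
        (∑ k ∈ range m, sgn (σ k) * corr ((fun j : ℕ => μ (j : Fin (m+1))) k))
          - (corr (μ (Fin.last m))) * ∏ k ∈ range m, sgn (σ k) ≤ (m : ℝ) - 1 := by
      intro σ
      rcases prod_sgn_pm (range m) σ with hP | hP <;>
      · set s : Fin (m+1) → ℝ :=
          fun k => if k.val < m then sgn (σ k.val) else -(∏ j ∈ range m, sgn (σ j)) with hsdef
        have hsv : ∀ k, s k = 1 ∨ s k = -1 := by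
          intro k
          simp only [hsdef]
          by_cases h : k.val < m
          · rw [if_pos h]; exact Cyc.sgn_cases _
          · rw [if_neg h, hP]; norm_num
        have hcs : ∀ k : Fin m, s k.castSucc = sgn (σ k.val) := by
          intro k
          simp only [hsdef, Fin.coe_castSucc]
          exact if_pos k.isLt
        have hlastv : s (Fin.last m) = -(∏ j ∈ range m, sgn (σ j)) := by
          simp only [hsdef, Fin.val_last]
          simp
        have hsprod : (∏ k, s k) = -1 := by
          rw [Fin.prod_univ_castSucc, Finset.prod_congr rfl fun k _ => hcs k,
            Fin.prod_univ_eq_prod_range (fun j => sgn (σ j)) m, hlastv, hP]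
          norm_num
        have h := hineq s hsv hsprod
        rw [Fin.sum_univ_castSucc] at h
        have hterm : ∀ k : Fin m,
            s k.castSucc * (∑ a, ∑ b, sgn a * sgn b * μ k.castSucc (a, b))
              = sgn (σ k.val) * corr (μ ((k.val : ℕ) : Fin (m+1))) := by
          intro k
          have e : ((k.val : ℕ) : Fin (m+1)) = k.castSucc := by
            apply Fin.ext
            simp [Fin.val_cast_of_lt (show k.val < m+1 by omega)]
          rw [hcs k, hcexpr, e]
        rw [Finset.sum_congr rfl fun k _ => hterm k,
          Fin.sum_univ_eq_sum_range (fun j => sgn (σ j) * corr (μ ((j : ℕ) : Fin (m+1)))) m,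
          hcexpr, hlastv] at h
        push_cast at h
        nlinarith [h]
    obtain ⟨ψ, hψd, hψctx, hψcl⟩ :=
      path m hm (fun j : ℕ => μ (j : Fin (m+1))) (corr (μ (Fin.last m)))
        (fun k _ => hdist _) hcons' hok hineqP
    refine ⟨ψ, hψd, ?_⟩
    intro k a b
    by_cases hk : k.val < m
    · have hlt : k < Fin.last m := by
        rw [Fin.lt_def]
        simpa using hk
      have e : k + 1 = (⟨k.val + 1, by omega⟩ : Fin (m+1)) := by
        apply Fin.ext
        rw [Fin.val_add_one_of_lt hlt]
      have hthis := hψctx k.val hk a b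
      rw [Fin.cast_val_eq_self k] at hthis
      rw [e]
      exact hthis
    · have hkm : k = Fin.last m := by
        apply Fin.ext
        simp only [Fin.val_last]
        omega
      have hkp : k + 1 = 0 := by rw [hkm, Fin.last_add_one]
      rw [hkp, hkm]
      have helper : pairD (m2 (μ (((m-1:ℕ)) : Fin (m+1)))) (m1 (μ ((0:ℕ) : Fin (m+1))))
          (corr (μ (Fin.last m))) (a, b) = μ (Fin.last m) (a, b) := by
        rw [e1, Nat.cast_zero, ← e2]
        exact (dist_pt (hdist (Fin.last m)).2 a b).symm
      exact (hψcl a b).trans helper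

end
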